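/- arXiv:2411.15107 — 2 statements merged into one kernel-verified Lean document; each statement's English description precedes it below -/
import Mathlib

section
/- If M is a uniformly discrete pointed metric space, i.e. inf{d(x,y) : x ≠ y ∈ M} > 0, then the Lipschitz-free space F(M) has property (V*). -/
open Filter Topology Metric Set

noncomputable section

/-- A formal series `∑ yₙ` in a normed space `Y` is weakly unconditionally Cauchy (WUC)
if `∑ |⟨φ, yₙ⟩| < ∞` for every continuous linear functional `φ` on `Y`. -/
def IsWUC {Y : Type*} [SeminormedAddCommGroup Y] [NormedSpace ℝ Y] (y : ℕ → Y) : Prop :=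
  ∀ φ : Y →L[ℝ] ℝ, Summable fun n => |φ (y n)|

/-- `Γ` is a (V*)-set in `X`: for every WUC series `∑ fₙ` in the dual `X*`,
`sup_{x ∈ Γ} |⟨x, fₙ⟩| → 0`. -/
def IsVStarSet {X : Type*} [SeminormedAddCommGroup X] [NormedSpace ℝ X] (Γ : Set X) : Prop :=
  ∀ f : ℕ → (X →L[ℝ] ℝ), IsWUC f →
    ∀ ε > (0 : ℝ), ∀ᶠ n in atTop, ∀ x ∈ Γ, |f n x| ≤ ε

/-- `Γ` is relatively weakly compact: its closure in the weak topology is compact. -/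
def RelWeaklyCompact {X : Type*} [SeminormedAddCommGroup X] [NormedSpace ℝ X]
    (Γ : Set X) : Prop :=
  IsCompact (closure ((toWeakSpace ℝ X) '' Γ))

/-- A normed space has Pełczyński's property (V*) if every (V*)-set is relatively
weakly compact. -/
def HasPropertyVStar (X : Type*) [SeminormedAddCommGroup X] [NormedSpace ℝ X] : Prop :=
  ∀ Γ : Set X, IsVStarSet Γ → RelWeaklyCompact Γ

/-- `F`, together with the map `δ : M → F`, is (a realization of) the Lipschitz-free space
over the pointed metric space `(M, o)`: `δ` is a base-point-preserving isometric embedding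
whose range has dense linear span, and every Lipschitz function `f : M → ℝ` vanishing at
the base point lifts to a continuous linear functional of norm at most `Lip(f)` (this
characterizes `F(M)`, with dual `Lip₀(M)`, up to isometric isomorphism). -/
structure IsLipschitzFree {M : Type*} [MetricSpace M] (o : M)
    {F : Type*} [NormedAddCommGroup F] [NormedSpace ℝ F] (δ : M → F) : Prop where
  isometry : Isometry δ
  map_base : δ o = 0
  dense_span : Dense (Submodule.span ℝ (Set.range δ) : Set F)
  lift : ∀ (L : NNReal) (f : M → ℝ), LipschitzWith L f → f o = 0 →
    ∃ φ : F →L[ℝ] ℝ, ‖φ‖ ≤ L ∧ ∀ x, φ (δ x) = f x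

/-- The subspace of `F` corresponding to the Lipschitz-free space `F(S)` over a subset
`S ⊆ M`: the closed linear span of `δ(S)`. -/
def freeSpan {M : Type*} [MetricSpace M] {F : Type*} [NormedAddCommGroup F]
    [NormedSpace ℝ F] (δ : M → F) (S : Set M) : Submodule ℝ F :=
  (Submodule.span ℝ (δ '' S)).topologicalClosure

theorem mem_freeSpan {M : Type*} [MetricSpace M] {F : Type*} [NormedAddCommGroup F]
    [NormedSpace ℝ F] (δ : M → F) {S : Set M} {x : M} (hx : x ∈ S) :
    δ x ∈ freeSpan δ S :=
  (Submodule.span ℝ (δ '' S)).le_topologicalClosure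
    (Submodule.subset_span ⟨x, hx, rfl⟩)


section VStarAux


lemma clamp_lip (x y : ℝ) : |max 0 (min 1 x) - max 0 (min 1 y)| ≤ |x - y| := by
  have h1 : |max 0 (min 1 x) - max 0 (min 1 y)| ≤ |min 1 x - min 1 y| := by
    have := abs_max_sub_max_le_abs (min 1 x) (min 1 y) 0
    simpa [max_comm] using this
  have h2 : |min 1 x - min 1 y| ≤ max |(1:ℝ) - 1| |x - y| :=
    abs_min_sub_min_le_max 1 x 1 y
  simp only [sub_self, abs_zero, max_eq_right (abs_nonneg (x - y))] at h2
  exact h1.trans h2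

/-- the radial cutoff: 1 on [0, r], 0 on [2r, ∞), slope 1/r. -/
def cutoff (r t : ℝ) : ℝ := max 0 (min 1 (2 - t / r))

lemma cutoff_nonneg (r t : ℝ) : 0 ≤ cutoff r t := le_max_left _ _

lemma cutoff_le_one (r t : ℝ) : cutoff r t ≤ 1 :=
  max_le (by norm_num) (min_le_left _ _)

lemma cutoff_eq_one {r t : ℝ} (hr : 0 < r) (h : t ≤ r) : cutoff r t = 1 := by
  have : (1:ℝ) ≤ 2 - t / r := by
    rw [le_sub_iff_add_le]
    have : t / r ≤ 1 := (div_le_one hr).2 h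
    linarith
  rw [cutoff, min_eq_left this]
  simp

lemma cutoff_eq_zero {r t : ℝ} (hr : 0 < r) (h : 2 * r ≤ t) : cutoff r t = 0 := by
  have h2 : 2 - t / r ≤ 0 := by
    rw [sub_nonpos, le_div_iff₀ hr]; linarith
  rw [cutoff, min_eq_right (by linarith), max_eq_left h2]

lemma cutoff_pos_lt {r t : ℝ} (hr : 0 < r) (h : cutoff r t ≠ 0) : t < 2 * r := by
  by_contra hc
  exact h (cutoff_eq_zero hr (by linarith [not_lt.mp hc]))

lemma cutoff_lip {r : ℝ} (hr : 0 < r) (s t : ℝ) :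
    |cutoff r s - cutoff r t| ≤ |s - t| / r := by
  have := clamp_lip (2 - s / r) (2 - t / r)
  calc |cutoff r s - cutoff r t| ≤ |(2 - s/r) - (2 - t/r)| := this
    _ = |t - s| / r := by
        rw [show (2 - s/r) - (2 - t/r) = (t - s)/r by ring, abs_div, abs_of_pos hr]
    _ = |s - t| / r := by rw [abs_sub_comm]

section FreeStuff

variable {M : Type*} [MetricSpace M] {o : M}
  {F : Type*} [NormedAddCommGroup F] [NormedSpace ℝ F] {δ : M → F}

/-- uniqueness of lifts -/
lemma lift_unique (hδ : IsLipschitzFree o δ) {ψ₁ ψ₂ : F →L[ℝ] ℝ}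
    (h : ∀ x, ψ₁ (δ x) = ψ₂ (δ x)) : ψ₁ = ψ₂ := by
  refine ContinuousLinearMap.ext_on hδ.dense_span ?_
  rintro _ ⟨x, rfl⟩
  exact h x

/-- get a lift with a real Lipschitz bound -/
lemma lift' (hδ : IsLipschitzFree o δ) {C : ℝ} (hC : 0 ≤ C) {f : M → ℝ}
    (hf : ∀ u v : M, |f u - f v| ≤ C * dist u v) (hfo : f o = 0) :
    ∃ φ : F →L[ℝ] ℝ, ‖φ‖ ≤ C ∧ ∀ x, φ (δ x) = f x := by
  obtain ⟨φ, hφ1, hφ2⟩ := hδ.lift C.toNNReal f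
    (LipschitzWith.of_dist_le_mul (fun u v => by
      rw [Real.dist_eq, Real.coe_toNNReal' C, max_eq_left hC]; exact hf u v)) hfo
  refine ⟨φ, ?_, hφ2⟩
  rwa [Real.coe_toNNReal' C, max_eq_left hC] at hφ1

lemma restrict_lip (hδ : IsLipschitzFree o δ) (φ : F →L[ℝ] ℝ) (hφ : ‖φ‖ ≤ 1)
    (u v : M) : |φ (δ u) - φ (δ v)| ≤ dist u v := by
  have h1 : |φ (δ u) - φ (δ v)| = ‖φ (δ u - δ v)‖ := by
    rw [map_sub]; rfl
  rw [h1]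
  calc ‖φ (δ u - δ v)‖ ≤ ‖φ‖ * ‖δ u - δ v‖ := φ.le_opNorm _
    _ ≤ 1 * dist u v := by
        rw [← dist_eq_norm, hδ.isometry.dist_eq]
        exact mul_le_mul_of_nonneg_right hφ dist_nonneg
    _ = dist u v := one_mul _

lemma restrict_bound (hδ : IsLipschitzFree o δ) (φ : F →L[ℝ] ℝ) (hφ : ‖φ‖ ≤ 1)
    (y : M) : |φ (δ y)| ≤ dist y o := by
  have := restrict_lip hδ φ hφ y o
  rwa [hδ.map_base, map_zero, sub_zero] at this

/-- the key cutoff-difference product bound -/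
lemma cut_prod_bound {s : ℝ} (hs : 0 < s) {G : M → ℝ}
    (hGd : ∀ y, |G y| ≤ dist y o) (u v : M) :
    |G v| * |cutoff s (dist u o) - cutoff s (dist v o)| ≤ 3 * dist u v := by
  set a := dist u o with ha
  set b := dist v o with hb
  have habd : |a - b| ≤ dist u v := abs_dist_sub_le u v o
  have hGv : |G v| ≤ b := hGd v
  have hb0 : 0 ≤ b := dist_nonneg
  have hcut : |cutoff s a - cutoff s b| ≤ |a - b| / s := cutoff_lip hs a b
  rcases le_or_gt b (3 * s) with hb3 | hb3
  · calc |G v| * |cutoff s a - cutoff s b| ≤ b * (|a - b| / s) :=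
          mul_le_mul hGv hcut (abs_nonneg _) hb0
      _ ≤ (3 * s) * (dist u v / s) := by gcongr
      _ = 3 * dist u v := by field_simp
  · by_cases hne : cutoff s a = cutoff s b
    · rw [hne, sub_self, abs_zero, mul_zero]; positivity
    · have hcb : cutoff s b = 0 := cutoff_eq_zero hs (by linarith)
      have hca : cutoff s a ≠ 0 := by rw [hcb] at hne; exact hne
      have haz : a < 2 * s := cutoff_pos_lt hs hca
      have hd : b - a ≤ dist u v := by
        have := abs_dist_sub_le v u o
        rw [abs_sub_le_iff, dist_comm v u] at this
        exact this.1
      have hle1 : |cutoff s a - cutoff s b| ≤ 1 := by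
        rw [hcb, sub_zero, abs_of_nonneg (cutoff_nonneg _ _)]
        exact cutoff_le_one _ _
      calc |G v| * |cutoff s a - cutoff s b| ≤ b * 1 :=
            mul_le_mul hGv hle1 (abs_nonneg _) hb0
        _ = b := mul_one b
        _ ≤ 3 * dist u v := by nlinarith

/-- multiplying by a cutoff keeps Lipschitz (up to +3) -/
lemma cutMul_lip {s : ℝ} (hs : 0 < s) {K : ℝ} {G : M → ℝ}
    (hG : ∀ u v, |G u - G v| ≤ K * dist u v) (hGd : ∀ y, |G y| ≤ dist y o)
    (u v : M) :
    |cutoff s (dist u o) * G u - cutoff s (dist v o) * G v| ≤ (K + 3) * dist u v := by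
  have key : cutoff s (dist u o) * G u - cutoff s (dist v o) * G v
      = cutoff s (dist u o) * (G u - G v) + G v * (cutoff s (dist u o) - cutoff s (dist v o)) := by
    ring
  rw [key]
  have h1 : |cutoff s (dist u o) * (G u - G v)| ≤ K * dist u v := by
    rw [abs_mul, abs_of_nonneg (cutoff_nonneg _ _)]
    calc cutoff s (dist u o) * |G u - G v| ≤ 1 * |G u - G v| :=
          mul_le_mul_of_nonneg_right (cutoff_le_one _ _) (abs_nonneg _)
      _ = |G u - G v| := one_mul _
      _ ≤ K * dist u v := hG u v
  have h2 : |G v * (cutoff s (dist u o) - cutoff s (dist v o))| ≤ 3 * dist u v := by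
    rw [abs_mul]; exact cut_prod_bound hs hGd u v
  calc _ ≤ |cutoff s (dist u o) * (G u - G v)|
          + |G v * (cutoff s (dist u o) - cutoff s (dist v o))| := abs_add_le _ _
    _ ≤ K * dist u v + 3 * dist u v := add_le_add h1 h2
    _ = (K + 3) * dist u v := by ring

lemma cutMulOne_lip {s : ℝ} (hs : 0 < s) {K : ℝ} {G : M → ℝ}
    (hG : ∀ u v, |G u - G v| ≤ K * dist u v) (hGd : ∀ y, |G y| ≤ dist y o)
    (u v : M) :
    |(1 - cutoff s (dist u o)) * G u - (1 - cutoff s (dist v o)) * G v|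
      ≤ (K + 3) * dist u v := by
  have key : (1 - cutoff s (dist u o)) * G u - (1 - cutoff s (dist v o)) * G v
      = (1 - cutoff s (dist u o)) * (G u - G v)
        - G v * (cutoff s (dist u o) - cutoff s (dist v o)) := by ring
  rw [key]
  have h1 : |(1 - cutoff s (dist u o)) * (G u - G v)| ≤ K * dist u v := by
    rw [abs_mul, abs_of_nonneg (by linarith [cutoff_le_one s (dist u o)] : (0:ℝ) ≤ 1 - cutoff s (dist u o))]
    calc (1 - cutoff s (dist u o)) * |G u - G v| ≤ 1 * |G u - G v| :=
          mul_le_mul_of_nonneg_right (by linarith [cutoff_nonneg s (dist u o)]) (abs_nonneg _)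
      _ = |G u - G v| := one_mul _
      _ ≤ K * dist u v := hG u v
  have h2 : |G v * (cutoff s (dist u o) - cutoff s (dist v o))| ≤ 3 * dist u v := by
    rw [abs_mul]; exact cut_prod_bound hs hGd u v
  calc _ ≤ |(1 - cutoff s (dist u o)) * (G u - G v)|
          + |G v * (cutoff s (dist u o) - cutoff s (dist v o))| := abs_sub _ _
    _ ≤ K * dist u v + 3 * dist u v := add_le_add h1 h2
    _ = (K + 3) * dist u v := by ring

end FreeStuff

section CoordStuff

open scoped Classical

variable {M : Type*} [MetricSpace M] {o : M}
  {F : Type*} [NormedAddCommGroup F] [NormedSpace ℝ F] {δ : M → F} {θ : ℝ}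
  {e : M → F →L[ℝ] ℝ}

/-- package for the coordinate functionals -/
def IsCoord (θ : ℝ) (o : M) (δ : M → F) (e : M → F →L[ℝ] ℝ) : Prop :=
  (∀ x, ‖e x‖ ≤ 1) ∧ ∀ x y, e x (δ y) = if y = x ∧ x ≠ o then θ/2 else 0

lemma coord_exists (hδ : IsLipschitzFree o δ) (hθ : 0 < θ)
    (hsep : ∀ x y : M, x ≠ y → θ ≤ dist x y) :
    ∃ e : M → F →L[ℝ] ℝ, IsCoord θ o δ e := by
  have key : ∀ x : M, ∃ φ : F →L[ℝ] ℝ, ‖φ‖ ≤ 1 ∧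
      ∀ y, φ (δ y) = if y = x ∧ x ≠ o then θ/2 else 0 := by
    intro x
    apply lift' hδ zero_le_one
    · intro u v
      rcases eq_or_ne u v with rfl | huv
      · simp
      · have hd : θ ≤ dist u v := hsep u v huv
        have h1 : |(if u = x ∧ x ≠ o then θ/2 else 0) - (if v = x ∧ x ≠ o then θ/2 else 0)| ≤ θ := by
          have hab : |θ/2| ≤ θ := by
            rw [abs_of_nonneg (by linarith)]; linarith
          split_ifs <;>
            simp only [sub_zero, zero_sub, sub_self, abs_zero, abs_neg] <;> linarith
        calc |(if u = x ∧ x ≠ o then θ/2 else 0) - (if v = x ∧ x ≠ o then θ/2 else 0)|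
            ≤ θ := h1
          _ ≤ dist u v := hd
          _ = 1 * dist u v := (one_mul _).symm
    · simp only [ite_eq_right_iff, and_imp]
      intro h1 h2
      exact absurd h1.symm h2
  choose e he1 he2 using key
  exact ⟨e, he1, he2⟩

/-- finite ℓ¹ bound for coordinates -/
lemma ell1_bound (hδ : IsLipschitzFree o δ) (hθ : 0 < θ)
    (hsep : ∀ x y : M, x ≠ y → θ ≤ dist x y) (hc : IsCoord θ o δ e)
    (A : Finset M) (μ : F) : ∑ x ∈ A, |e x μ| ≤ ‖μ‖ := by
  set s : M → ℝ := fun x => if 0 ≤ e x μ then 1 else -1 with hs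
  have hsabs : ∀ x, |s x| = 1 := by
    intro x; simp only [hs]; split_ifs <;> simp
  have hsmul : ∀ x, s x * e x μ = |e x μ| := by
    intro x; simp only [hs]
    split_ifs with h
    · rw [one_mul, abs_of_nonneg h]
    · rw [abs_of_neg (not_le.mp h)]; ring
  set f : M → ℝ := fun y => ∑ x ∈ A, s x * (if y = x ∧ x ≠ o then θ/2 else 0) with hf
  have hf_eq : ∀ y, f y = if y ∈ A ∧ y ≠ o then s y * (θ/2) else 0 := by
    intro y
    by_cases hy : y ∈ A ∧ y ≠ o
    · rw [if_pos hy]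
      simp only [hf]
      rw [Finset.sum_eq_single y]
      · simp [hy.2]
      · intro x hx hxy
        have : ¬(y = x ∧ x ≠ o) := fun h => hxy h.1.symm
        rw [if_neg this, mul_zero]
      · intro h; exact absurd hy.1 h
    · rw [if_neg hy]
      simp only [hf]
      apply Finset.sum_eq_zero
      intro x hx
      have : ¬(y = x ∧ x ≠ o) := by
        rintro ⟨rfl, hxo⟩
        exact hy ⟨hx, hxo⟩
      rw [if_neg this, mul_zero]
  have hfb : ∀ y, |f y| ≤ θ/2 := by
    intro y
    rw [hf_eq]
    split_ifs
    · rw [abs_mul, hsabs, one_mul, abs_of_nonneg (by linarith)]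
    · rw [abs_zero]; linarith
  have hfo : f o = 0 := by rw [hf_eq]; simp
  have hlip : ∀ u v : M, |f u - f v| ≤ 1 * dist u v := by
    intro u v
    rcases eq_or_ne u v with rfl | huv
    · simp
    · have hd := hsep u v huv
      calc |f u - f v| ≤ |f u| + |f v| := abs_sub _ _
        _ ≤ θ/2 + θ/2 := add_le_add (hfb u) (hfb v)
        _ = θ := by ring
        _ ≤ dist u v := hd
        _ = 1 * dist u v := (one_mul _).symm
  obtain ⟨ψ, hψn, hψe⟩ := lift' hδ zero_le_one hlip hfo
  have hψ_eq : ψ = ∑ x ∈ A, s x • e x := by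
    apply lift_unique hδ
    intro y
    rw [hψe y]
    simp only [hf, ContinuousLinearMap.sum_apply, ContinuousLinearMap.smul_apply,
      smul_eq_mul]
    apply Finset.sum_congr rfl
    intro x hx
    rw [hc.2 x y]
  calc ∑ x ∈ A, |e x μ| = ∑ x ∈ A, s x * e x μ :=
        Finset.sum_congr rfl (fun x _ => (hsmul x).symm)
    _ = ψ μ := by
        rw [hψ_eq]
        simp only [ContinuousLinearMap.sum_apply, ContinuousLinearMap.smul_apply,
          smul_eq_mul]
    _ ≤ |ψ μ| := le_abs_self _
    _ ≤ ‖ψ‖ * ‖μ‖ := ψ.le_opNorm μ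
    _ ≤ 1 * ‖μ‖ := mul_le_mul_of_nonneg_right hψn (norm_nonneg _)
    _ = ‖μ‖ := one_mul _

end CoordStuff

section VStarBasic

open scoped Classical

variable {M : Type*} [MetricSpace M] {o : M}
  {F : Type*} [NormedAddCommGroup F] [NormedSpace ℝ F] {δ : M → F} {θ : ℝ}
  {e : M → F →L[ℝ] ℝ}

/-- (V*)-sets are bounded -/
lemma vstar_bounded {Γ : Set F} (hV : IsVStarSet Γ) :
    ∃ C : ℝ, 0 ≤ C ∧ ∀ μ ∈ Γ, ‖μ‖ ≤ C := by
  have hpt : ∀ φ : F →L[ℝ] ℝ, ∃ C, ∀ μ ∈ Γ, |φ μ| ≤ C := by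
    intro φ
    have hwuc : IsWUC (fun n => (2⁻¹:ℝ)^n • φ) := by
      intro ψ
      have heq : (fun n => |ψ ((2⁻¹:ℝ)^n • φ)|) = fun n => |ψ φ| * (1/2:ℝ)^n := by
        funext n
        rw [map_smul, smul_eq_mul, abs_mul, abs_pow]
        rw [abs_of_pos (by norm_num : (0:ℝ) < 2⁻¹)]
        norm_num
        ring
      rw [heq]
      exact summable_geometric_two.mul_left _
    obtain ⟨n, hn⟩ := (hV _ hwuc 1 one_pos).exists
    refine ⟨2^n, fun μ hμ => ?_⟩
    have h1 := hn μ hμ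
    rw [ContinuousLinearMap.smul_apply, smul_eq_mul, abs_mul, abs_pow] at h1
    have h2 : |(2:ℝ)⁻¹| = 2⁻¹ := abs_of_pos (by norm_num)
    rw [h2] at h1
    calc |φ μ| = (2:ℝ)^n * ((2⁻¹:ℝ)^n * |φ μ|) := by
          rw [← mul_assoc, ← mul_pow]; norm_num
      _ ≤ (2:ℝ)^n * 1 := mul_le_mul_of_nonneg_left h1 (by positivity)
      _ = 2^n := mul_one _
  have hpt' : ∀ φ : StrongDual ℝ F, ∃ C, ∀ μ : Γ,
      ‖(NormedSpace.inclusionInDoubleDualLi ℝ (E := F)) (μ : F) φ‖ ≤ C := by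
    intro φ
    obtain ⟨C, hC⟩ := hpt φ
    exact ⟨C, fun μ => hC μ μ.2⟩
  obtain ⟨C', hC'⟩ := banach_steinhaus
    (g := fun μ : Γ => (NormedSpace.inclusionInDoubleDualLi ℝ (E := F)) (μ : F))
    (fun φ => hpt' φ)
  refine ⟨max C' 0, le_max_right _ _, fun μ hμ => ?_⟩
  have := hC' ⟨μ, hμ⟩
  rw [(NormedSpace.inclusionInDoubleDualLi ℝ).norm_map] at this
  exact this.trans (le_max_left _ _)

/-- bounded functions on a uniformly discrete space are Lipschitz -/
lemma lip_of_bounded (hsep : ∀ x y : M, x ≠ y → θ ≤ dist x y) {f : M → ℝ}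
    (hb : ∀ y, |f y| ≤ θ/2) : ∀ u v : M, |f u - f v| ≤ 1 * dist u v := by
  intro u v
  rcases eq_or_ne u v with rfl | huv
  · simp
  · calc |f u - f v| ≤ |f u| + |f v| := abs_sub _ _
      _ ≤ θ/2 + θ/2 := add_le_add (hb u) (hb v)
      _ = θ := by ring
      _ ≤ dist u v := hsep u v huv
      _ = 1 * dist u v := (one_mul _).symm

/-- evaluation of disjoint indicator sums -/
lemma ind_sum_eq (θ : ℝ) (o : M) (s : M → ℝ) (A : Finset M) (y : M) :
    ∑ x ∈ A, s x * (if y = x ∧ x ≠ o then θ/2 else 0)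
      = if y ∈ A ∧ y ≠ o then s y * (θ/2) else 0 := by
  by_cases hy : y ∈ A ∧ y ≠ o
  · rw [if_pos hy, Finset.sum_eq_single y]
    · simp [hy.2]
    · intro x hx hxy
      have : ¬(y = x ∧ x ≠ o) := fun h => hxy h.1.symm
      rw [if_neg this, mul_zero]
    · intro h; exact absurd hy.1 h
  · rw [if_neg hy]
    apply Finset.sum_eq_zero
    intro x hx
    have : ¬(y = x ∧ x ≠ o) := by
      rintro ⟨rfl, hxo⟩
      exact hy ⟨hx, hxo⟩
    rw [if_neg this, mul_zero]

/-- Step B': uniform smallness of ℓ¹-tails of coordinates on a (V*)-set -/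
lemma vstar_small_tails (hδ : IsLipschitzFree o δ) (hθ : 0 < θ)
    (hsep : ∀ x y : M, x ≠ y → θ ≤ dist x y) (hc : IsCoord θ o δ e)
    {Γ : Set F} (hV : IsVStarSet Γ) :
    ∀ η > (0:ℝ), ∃ A : Finset M, ∀ μ ∈ Γ, ∀ A' : Finset M,
      (∀ x ∈ A', x ∉ A) → ∑ x ∈ A', |e x μ| ≤ η := by
  intro η hη
  by_contra hcon
  push_neg at hcon
  choose μf hμf A'f hdisj hsum using hcon
  set B : ℕ → Finset M := fun n => Nat.rec ∅ (fun _ Bn => Bn ∪ A'f Bn) n with hB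
  have hBsucc : ∀ n, B (n+1) = B n ∪ A'f (B n) := fun n => rfl
  have hBle : ∀ m n, m ≤ n → B m ⊆ B n := by
    intro m n hmn
    induction n, hmn using Nat.le_induction with
    | base => exact subset_rfl
    | succ k hk ih =>
        refine ih.trans ?_
        rw [hBsucc]
        exact Finset.subset_union_left
  set A : ℕ → Finset M := fun k => A'f (B k) with hA
  set μs : ℕ → F := fun k => μf (B k) with hμs
  have hAdisj : ∀ j k : ℕ, j ≠ k → ∀ x, x ∈ A j → x ∈ A k → False := by
    have key : ∀ j k : ℕ, j < k → ∀ x, x ∈ A j → x ∈ A k → False := by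
      intro j k hjk x hxj hxk
      have h1 : x ∈ B (j+1) := by
        rw [hBsucc]
        exact Finset.mem_union_right _ hxj
      have h2 : x ∈ B k := hBle _ _ hjk h1
      exact hdisj (B k) x hxk h2
    intro j k hjk x hxj hxk
    rcases hjk.lt_or_gt with h | h
    · exact key j k h x hxj hxk
    · exact key k j h x hxk hxj
  set s : ℕ → M → ℝ := fun k x => if 0 ≤ e x (μs k) then 1 else -1 with hs
  have hsabs : ∀ k x, |s k x| = 1 := by
    intro k x; simp only [hs]; split_ifs <;> simp
  have hsmul : ∀ k x, s k x * e x (μs k) = |e x (μs k)| := by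
    intro k x; simp only [hs]
    split_ifs with h
    · rw [one_mul, abs_of_nonneg h]
    · rw [abs_of_neg (not_le.mp h)]; ring
  set fk : ℕ → F →L[ℝ] ℝ := fun k => ∑ x ∈ A k, s k x • e x with hfk
  have hfkδ : ∀ k y, fk k (δ y) = if y ∈ A k ∧ y ≠ o then s k y * (θ/2) else 0 := by
    intro k y
    simp only [hfk, ContinuousLinearMap.sum_apply, ContinuousLinearMap.smul_apply,
      smul_eq_mul]
    rw [← ind_sum_eq θ o (s k) (A k) y]
    apply Finset.sum_congr rfl
    intro x hx
    rw [hc.2 x y]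
  have hfkval : ∀ k, η < fk k (μs k) := by
    intro k
    have : fk k (μs k) = ∑ x ∈ A k, |e x (μs k)| := by
      simp only [hfk, ContinuousLinearMap.sum_apply, ContinuousLinearMap.smul_apply,
        smul_eq_mul]
      exact Finset.sum_congr rfl (fun x _ => hsmul k x)
    rw [this]
    exact hsum (B k)
  have hwuc : IsWUC fk := by
    intro ψ
    apply summable_of_sum_range_le (c := ‖ψ‖) (fun n => abs_nonneg _)
    intro N
    set ε : ℕ → ℝ := fun k => if 0 ≤ ψ (fk k) then 1 else -1 with hε
    have hεabs : ∀ k, |ε k| = 1 := by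
      intro k; simp only [hε]; split_ifs <;> simp
    have hεmul : ∀ k, ε k * ψ (fk k) = |ψ (fk k)| := by
      intro k; simp only [hε]
      split_ifs with h
      · rw [one_mul, abs_of_nonneg h]
      · rw [abs_of_neg (not_le.mp h)]; ring
    set Φ : F →L[ℝ] ℝ := ∑ k ∈ Finset.range N, ε k • fk k with hΦ
    set f : M → ℝ := fun y => ∑ k ∈ Finset.range N,
      ε k * (if y ∈ A k ∧ y ≠ o then s k y * (θ/2) else 0) with hf
    have hΦδ : ∀ y, Φ (δ y) = f y := by
      intro y
      simp only [hΦ, hf, ContinuousLinearMap.sum_apply, ContinuousLinearMap.smul_apply,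
        smul_eq_mul]
      exact Finset.sum_congr rfl (fun k _ => by rw [hfkδ k y])
    have hfb : ∀ y, |f y| ≤ θ/2 := by
      intro y
      by_cases hex : ∃ k ∈ Finset.range N, y ∈ A k ∧ y ≠ o
      · obtain ⟨k0, hk0N, hk0⟩ := hex
        have : f y = ε k0 * (s k0 y * (θ/2)) := by
          simp only [hf]
          rw [Finset.sum_eq_single k0]
          · rw [if_pos hk0]
          · intro k hk hne
            have : ¬(y ∈ A k ∧ y ≠ o) := by
              rintro ⟨hyk, -⟩
              exact hAdisj k k0 hne y hyk hk0.1
            rw [if_neg this, mul_zero]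
          · intro h; exact absurd hk0N h
        rw [this, abs_mul, abs_mul, hεabs, hsabs, one_mul, one_mul,
          abs_of_nonneg (by linarith : (0:ℝ) ≤ θ/2)]
      · push_neg at hex
        have : f y = 0 := by
          simp only [hf]
          apply Finset.sum_eq_zero
          intro k hk
          have hnk : ¬(y ∈ A k ∧ y ≠ o) := by
            rintro ⟨h1, h2⟩
            exact h2 (hex k hk h1)
          rw [if_neg hnk, mul_zero]
        rw [this, abs_zero]; linarith
    have hfo : f o = 0 := by
      simp only [hf]
      apply Finset.sum_eq_zero
      intro k hk
      rw [if_neg (by simp), mul_zero]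
    obtain ⟨ψ₀, hψ₀n, hψ₀e⟩ := lift' hδ zero_le_one (lip_of_bounded hsep hfb) hfo
    have hψ₀Φ : ψ₀ = Φ := lift_unique hδ (fun y => by rw [hψ₀e y, hΦδ y])
    have hΦn : ‖Φ‖ ≤ 1 := hψ₀Φ ▸ hψ₀n
    calc ∑ k ∈ Finset.range N, |ψ (fk k)|
        = ∑ k ∈ Finset.range N, ε k * ψ (fk k) :=
          Finset.sum_congr rfl (fun k _ => (hεmul k).symm)
      _ = ψ Φ := by
          rw [hΦ, map_sum]
          exact Finset.sum_congr rfl (fun k _ => by rw [map_smul, smul_eq_mul]) |>.symm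
      _ ≤ |ψ Φ| := le_abs_self _
      _ ≤ ‖ψ‖ * ‖Φ‖ := ψ.le_opNorm Φ
      _ ≤ ‖ψ‖ * 1 := mul_le_mul_of_nonneg_left hΦn (norm_nonneg _)
      _ = ‖ψ‖ := mul_one _
  obtain ⟨n, hn⟩ := (hV fk hwuc η hη).exists
  have h1 := hn (μs n) (hμf (B n))
  have h2 := hfkval n
  have h3 : fk n (μs n) ≤ |fk n (μs n)| := le_abs_self _
  linarith

end VStarBasic

section ShellStuff

open scoped Classical

variable {M : Type*} [MetricSpace M] {o : M}
  {F : Type*} [NormedAddCommGroup F] [NormedSpace ℝ F] {δ : M → F}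

/-- the far tail of a fixed element is small -/
lemma far_tail (hδ : IsLipschitzFree o δ) {K : ℝ} (hK : 0 ≤ K) {G : M → ℝ}
    (hG : ∀ u v, |G u - G v| ≤ K * dist u v) (hGo : G o = 0)
    (hGd : ∀ y, |G y| ≤ dist y o) (μ : F) {ε : ℝ} (hε : 0 < ε) :
    ∃ R₀ : ℝ, 1 ≤ R₀ ∧ ∀ R, R₀ ≤ R → ∀ ψ : F →L[ℝ] ℝ,
      (∀ y, ψ (δ y) = (1 - cutoff R (dist y o)) * G y) → |ψ μ| ≤ ε := by
  set ε' : ℝ := ε / (K + 4) with hε'def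
  have hε' : 0 < ε' := by
    apply div_pos hε; linarith
  obtain ⟨ν, hνS, hνd⟩ := Metric.mem_closure_iff.1 (hδ.dense_span μ) ε' hε'
  have hνmem : ν ∈ Submodule.span ℝ (Set.range δ) := hνS
  obtain ⟨c, hc⟩ := Finsupp.mem_span_range_iff_exists_finsupp.1 hνmem
  have hsum0 : (0:ℝ) ≤ ∑ x ∈ c.support, dist x o :=
    Finset.sum_nonneg (fun y _ => dist_nonneg)
  refine ⟨1 + ∑ x ∈ c.support, dist x o, by linarith, ?_⟩
  intro R hR ψ hψ
  have hR1 : (1:ℝ) ≤ R := by linarith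
  have hR0 : (0:ℝ) < R := by linarith
  have hxball : ∀ x ∈ c.support, dist x o ≤ R := by
    intro x hx
    have h1 : dist x o ≤ ∑ y ∈ c.support, dist y o :=
      Finset.single_le_sum (f := fun y => dist y o) (fun y _ => dist_nonneg) hx
    linarith
  have hψν : ψ ν = 0 := by
    rw [← hc, map_finsuppSum]
    apply Finset.sum_eq_zero
    intro x hx
    show ψ (c x • δ x) = 0
    rw [map_smul, smul_eq_mul, hψ x, cutoff_eq_one hR0 (hxball x hx)]
    ring
  have hψn : ‖ψ‖ ≤ K + 3 := by
    obtain ⟨ψ', hψ'n, hψ'e⟩ := lift' hδ (by linarith : (0:ℝ) ≤ K + 3)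
      (cutMulOne_lip hR0 hG hGd)
      (by rw [hGo, mul_zero])
    have : ψ = ψ' := lift_unique hδ (fun y => by rw [hψ y, hψ'e y])
    rw [this]; exact hψ'n
  have key : ψ μ = ψ (μ - ν) := by rw [map_sub, hψν, sub_zero]
  rw [key]
  calc |ψ (μ - ν)| ≤ ‖ψ‖ * ‖μ - ν‖ := ψ.le_opNorm _
    _ ≤ (K + 3) * ε' := by
        apply mul_le_mul hψn _ (norm_nonneg _) (by linarith)
        rw [← dist_eq_norm]
        exact hνd.le
    _ ≤ ε := by
        rw [hε'def]
        rw [div_eq_inv_mul, ← mul_assoc]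
        have h4 : (0:ℝ) < K + 4 := by linarith
        rw [mul_comm (K+3) (K+4)⁻¹, mul_assoc]
        calc (K+4)⁻¹ * ((K+3) * ε) ≤ (K+4)⁻¹ * ((K+4) * ε) := by
              apply mul_le_mul_of_nonneg_left _ (by positivity)
              apply mul_le_mul_of_nonneg_right (by linarith) hε.le
          _ = ε := by field_simp

/-- signed sums of functions supported on separated shells stay Lipschitz -/
lemma shell_sum {a b : ℕ → ℝ} (ha0 : ∀ k, 0 < a k) (hab : ∀ k, a k ≤ b k)
    (hgap : ∀ k, 4 * b k ≤ a (k+1)) {G : ℕ → M → ℝ} {L : ℝ} (hL : 2 ≤ L)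
    (hGlip : ∀ k, ∀ u v, |G k u - G k v| ≤ L * dist u v)
    (hGd : ∀ k y, |G k y| ≤ dist y o)
    (hlo : ∀ k y, dist y o ≤ a k → G k y = 0)
    (hhi : ∀ k y, b k ≤ dist y o → G k y = 0)
    {ε : ℕ → ℝ} (hε : ∀ k, |ε k| ≤ 1) (N : ℕ) :
    ∀ u v : M, |(∑ k ∈ Finset.range N, ε k * G k u)
      - ∑ k ∈ Finset.range N, ε k * G k v| ≤ L * dist u v := by
  have hmono : ∀ i j, i < j → 4 * b i ≤ a j := by
    intro i j hij
    induction j, hij using Nat.le_induction with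
    | base => exact hgap i
    | succ k hk ih =>
        refine ih.trans ?_
        have := hgap k
        have := hab k
        have := ha0 k
        linarith
  have key0 : ∀ (i j : ℕ) (y : M), i < j → G i y ≠ 0 → G j y ≠ 0 → False := by
    intro i j y hij hi hj
    have h1 : dist y o < b i := by
      by_contra hcb
      exact hi (hhi i y (not_lt.mp hcb))
    have h2 : a j < dist y o := by
      by_contra hcb
      exact hj (hlo j y (not_lt.mp hcb))
    have h3 := hmono i j hij
    have h4 := ha0 i
    have h5 := hab i
    linarith
  have huniq : ∀ (y : M) (i j : ℕ), G i y ≠ 0 → G j y ≠ 0 → i = j := by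
    intro y i j hi hj
    by_contra hne
    rcases Ne.lt_or_gt hne with h | h
    · exact key0 i j y h hi hj
    · exact key0 j i y h hj hi
  have hSy : ∀ (y : M) (i : ℕ), i ∈ Finset.range N → G i y ≠ 0 →
      (∑ k ∈ Finset.range N, ε k * G k y) = ε i * G i y := by
    intro y i hiN hi
    apply Finset.sum_eq_single_of_mem i hiN
    intro k hk hne
    have : G k y = 0 := by
      by_contra h
      exact hne (huniq y k i h hi)
    rw [this, mul_zero]
  -- single-shell bound
  have hsingle : ∀ (i : ℕ) (u v : M), |ε i * G i u - ε i * G i v| ≤ L * dist u v := by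
    intro i u v
    rw [← mul_sub, abs_mul]
    calc |ε i| * |G i u - G i v| ≤ 1 * |G i u - G i v| :=
          mul_le_mul_of_nonneg_right (hε i) (abs_nonneg _)
      _ = |G i u - G i v| := one_mul _
      _ ≤ L * dist u v := hGlip i u v
  -- cross-shell bound
  have hcross : ∀ (i j : ℕ) (u v : M), i < j → G i u ≠ 0 → G j v ≠ 0 →
      dist u o + dist v o ≤ 2 * dist u v := by
    intro i j u v hij hi hj
    have h1 : dist u o < b i := by
      by_contra hcb
      exact hi (hhi i u (not_lt.mp hcb))
    have h2 : a j < dist v o := by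
      by_contra hcb
      exact hj (hlo j v (not_lt.mp hcb))
    have h3 := hmono i j hij
    have h4 := ha0 i
    have h5 := hab i
    have h6 : dist v o - dist u o ≤ dist u v := by
      have := dist_triangle v u o
      rw [dist_comm v u] at this
      linarith
    nlinarith
  intro u v
  by_cases hu : ∃ i ∈ Finset.range N, G i u ≠ 0
  · obtain ⟨i, hiN, hiu⟩ := hu
    rw [hSy u i hiN hiu]
    by_cases hv : ∃ j ∈ Finset.range N, G j v ≠ 0
    · obtain ⟨j, hjN, hjv⟩ := hv
      rw [hSy v j hjN hjv]
      by_cases hij : i = j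
      · subst hij
        exact hsingle i u v
      · have hbound : |ε i * G i u - ε j * G j v| ≤ dist u o + dist v o := by
          calc |ε i * G i u - ε j * G j v| ≤ |ε i * G i u| + |ε j * G j v| := abs_sub _ _
            _ ≤ dist u o + dist v o := by
                apply add_le_add
                · rw [abs_mul]
                  calc |ε i| * |G i u| ≤ 1 * |G i u| :=
                        mul_le_mul_of_nonneg_right (hε i) (abs_nonneg _)
                    _ = |G i u| := one_mul _
                    _ ≤ dist u o := hGd i u
                · rw [abs_mul]
                  calc |ε j| * |G j v| ≤ 1 * |G j v| :=
                        mul_le_mul_of_nonneg_right (hε j) (abs_nonneg _)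
                    _ = |G j v| := one_mul _
                    _ ≤ dist v o := hGd j v
        have h2d : dist u o + dist v o ≤ 2 * dist u v := by
          rcases Ne.lt_or_gt hij with h | h
          · exact hcross i j u v h hiu hjv
          · have := hcross j i v u h hjv hiu
            rw [dist_comm v u] at this
            linarith
        calc |ε i * G i u - ε j * G j v| ≤ 2 * dist u v := hbound.trans h2d
          _ ≤ L * dist u v := mul_le_mul_of_nonneg_right hL dist_nonneg
    · push_neg at hv
      have hSv : (∑ k ∈ Finset.range N, ε k * G k v) = 0 :=
        Finset.sum_eq_zero (fun k hk => by rw [hv k hk, mul_zero])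
      rw [hSv]
      have hGiv : G i v = 0 := hv i hiN
      have : ε i * G i u - 0 = ε i * G i u - ε i * G i v := by rw [hGiv, mul_zero]
      rw [this]
      exact hsingle i u v
  · push_neg at hu
    have hSu : (∑ k ∈ Finset.range N, ε k * G k u) = 0 :=
      Finset.sum_eq_zero (fun k hk => by rw [hu k hk, mul_zero])
    rw [hSu]
    by_cases hv : ∃ j ∈ Finset.range N, G j v ≠ 0
    · obtain ⟨j, hjN, hjv⟩ := hv
      rw [hSy v j hjN hjv]
      have hGju : G j u = 0 := hu j hjN
      have : (0:ℝ) - ε j * G j v = ε j * G j u - ε j * G j v := by rw [hGju, mul_zero]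
      rw [this]
      exact hsingle j u v
    · push_neg at hv
      have hSv : (∑ k ∈ Finset.range N, ε k * G k v) = 0 :=
        Finset.sum_eq_zero (fun k hk => by rw [hv k hk, mul_zero])
      rw [hSv, sub_zero, abs_zero]
      positivity

end ShellStuff

section StepA

open scoped Classical

variable {M : Type*} [MetricSpace M] {o : M}
  {F : Type*} [NormedAddCommGroup F] [NormedSpace ℝ F] {δ : M → F}

/-- Step A: uniform smallness of radial tails on a (V*)-set -/
lemma vstar_radial (hδ : IsLipschitzFree o δ) {Γ : Set F} (hV : IsVStarSet Γ) :
    ∀ η > (0:ℝ), ∃ r : ℝ, 1 ≤ r ∧ ∀ ψ : F →L[ℝ] ℝ,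
      (∃ g : M → ℝ, (∀ u v : M, |g u - g v| ≤ 1 * dist u v) ∧ g o = 0 ∧
        ∀ y, ψ (δ y) = (1 - cutoff r (dist y o)) * g y) →
      ∀ μ ∈ Γ, |ψ μ| ≤ η := by
  intro η hη
  by_contra hcon
  push_neg at hcon
  choose ψf hrest using hcon
  choose gf hglip hgo hgδ using fun r hr => (hrest r hr).1
  choose μf hμΓ hμval using fun r hr => (hrest r hr).2
  -- facts about the inner functions G1 r hr := (1 - cutoff r ∘ dist · o) * gf r hr
  have hgd : ∀ (r : ℝ) (hr : 1 ≤ r) (y : M), |gf r hr y| ≤ dist y o := by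
    intro r hr y
    have := hglip r hr y o
    rwa [hgo r hr, sub_zero, one_mul] at this
  have hG1lip : ∀ (r : ℝ) (hr : 1 ≤ r) (u v : M),
      |(1 - cutoff r (dist u o)) * gf r hr u - (1 - cutoff r (dist v o)) * gf r hr v|
        ≤ 4 * dist u v := by
    intro r hr u v
    have h := cutMulOne_lip (by linarith : (0:ℝ) < r) (hglip r hr) (hgd r hr) u v
    calc _ ≤ (1 + 3) * dist u v := h
      _ = 4 * dist u v := by norm_num
  have hG1o : ∀ (r : ℝ) (hr : 1 ≤ r),
      (1 - cutoff r (dist o o)) * gf r hr o = 0 := by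
    intro r hr; rw [hgo r hr, mul_zero]
  have hG1d : ∀ (r : ℝ) (hr : 1 ≤ r) (y : M),
      |(1 - cutoff r (dist y o)) * gf r hr y| ≤ dist y o := by
    intro r hr y
    rw [abs_mul]
    calc |1 - cutoff r (dist y o)| * |gf r hr y| ≤ 1 * |gf r hr y| := by
          apply mul_le_mul_of_nonneg_right _ (abs_nonneg _)
          rw [abs_of_nonneg (by linarith [cutoff_le_one r (dist y o)])]
          linarith [cutoff_nonneg r (dist y o)]
      _ = |gf r hr y| := one_mul _
      _ ≤ dist y o := hgd r hr y
  have hG1lo : ∀ (r : ℝ) (hr : 1 ≤ r) (y : M), dist y o ≤ r →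
      (1 - cutoff r (dist y o)) * gf r hr y = 0 := by
    intro r hr y hy
    rw [cutoff_eq_one (by linarith) hy, sub_self, zero_mul]
  -- far tails of the chosen elements
  have hFT : ∀ (r : ℝ) (hr : 1 ≤ r), ∃ R₀ : ℝ, (1 ≤ R₀ ∧ r ≤ R₀) ∧
      ∀ R, R₀ ≤ R → ∀ ψ' : F →L[ℝ] ℝ,
        (∀ y, ψ' (δ y) = (1 - cutoff R (dist y o)) *
          ((1 - cutoff r (dist y o)) * gf r hr y)) →
        |ψ' (μf r hr)| ≤ η/2 := by
    intro r hr
    obtain ⟨R₀, hR₀1, hR₀P⟩ := far_tail hδ (by norm_num : (0:ℝ) ≤ 4)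
      (hG1lip r hr) (hG1o r hr) (hG1d r hr) (μf r hr) (half_pos hη)
    exact ⟨max R₀ r, ⟨le_trans hR₀1 (le_max_left _ _), le_max_right _ _⟩,
      fun R hR => hR₀P R (le_trans (le_max_left _ _) hR)⟩
  choose Rf hRf1 hRfP using hFT
  -- the lacunary radii
  set ρ : ℕ → {t : ℝ // 1 ≤ t} := fun n => Nat.rec ⟨1, le_refl 1⟩
    (fun _ p => ⟨8 * Rf p.1 p.2, by
      have h := (hRf1 p.1 p.2).1; linarith⟩) n with hρ
  set aa : ℕ → ℝ := fun k => (ρ k).1 with haa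
  set RR : ℕ → ℝ := fun k => Rf (ρ k).1 (ρ k).2 with hRR
  set bb : ℕ → ℝ := fun k => 2 * RR k with hbb
  have hsucc : ∀ k, aa (k+1) = 8 * RR k := fun k => rfl
  have ha1 : ∀ k, 1 ≤ aa k := fun k => (ρ k).2
  have ha0 : ∀ k, 0 < aa k := fun k => lt_of_lt_of_le one_pos (ha1 k)
  have hR1 : ∀ k, 1 ≤ RR k := fun k => (hRf1 (ρ k).1 (ρ k).2).1
  have haR : ∀ k, aa k ≤ RR k := fun k => (hRf1 (ρ k).1 (ρ k).2).2
  have hab : ∀ k, aa k ≤ bb k := by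
    intro k
    have := haR k
    have := hR1 k
    simp only [hbb]
    linarith
  have hgap : ∀ k, 4 * bb k ≤ aa (k+1) := by
    intro k
    rw [hsucc k]
    simp only [hbb]
    linarith
  -- the shell functions
  set Gf : ℕ → M → ℝ := fun k y => cutoff (RR k) (dist y o) *
    ((1 - cutoff ((ρ k).1) (dist y o)) * gf (ρ k).1 (ρ k).2 y) with hGf
  have hGflip : ∀ k u v, |Gf k u - Gf k v| ≤ 7 * dist u v := by
    intro k u v
    have h := cutMul_lip (by linarith [hR1 k] : (0:ℝ) < RR k) (K := 4)
      (fun u v => hG1lip (ρ k).1 (ρ k).2 u v) (fun y => hG1d (ρ k).1 (ρ k).2 y) u v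
    calc _ ≤ (4 + 3) * dist u v := h
      _ = 7 * dist u v := by norm_num
  have hGfd : ∀ k y, |Gf k y| ≤ dist y o := by
    intro k y
    simp only [hGf]
    rw [abs_mul]
    calc _ ≤ 1 * |(1 - cutoff ((ρ k).1) (dist y o)) * gf (ρ k).1 (ρ k).2 y| := by
          apply mul_le_mul_of_nonneg_right _ (abs_nonneg _)
          rw [abs_of_nonneg (cutoff_nonneg _ _)]
          exact cutoff_le_one _ _
      _ = _ := one_mul _
      _ ≤ dist y o := hG1d (ρ k).1 (ρ k).2 y
  have hGflo : ∀ k y, dist y o ≤ aa k → Gf k y = 0 := by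
    intro k y hy
    simp only [hGf]
    rw [hG1lo (ρ k).1 (ρ k).2 y hy, mul_zero]
  have hGfhi : ∀ k y, bb k ≤ dist y o → Gf k y = 0 := by
    intro k y hy
    simp only [hGf]
    rw [cutoff_eq_zero (by linarith [hR1 k]) (by simpa [hbb] using hy), zero_mul]
  have hGfo : ∀ k, Gf k o = 0 := by
    intro k
    simp only [hGf]
    rw [hG1o (ρ k).1 (ρ k).2, mul_zero]
  -- the lifts
  have hlift : ∀ k, ∃ φ : F →L[ℝ] ℝ, ‖φ‖ ≤ 7 ∧ ∀ y, φ (δ y) = Gf k y := by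
    intro k
    apply lift' hδ (by norm_num : (0:ℝ) ≤ 7) (fun u v => hGflip k u v) (hGfo k)
  choose fk hfkn hfke using hlift
  -- lower bound for the values
  have hval : ∀ k, η/2 < |fk k (μf (ρ k).1 (ρ k).2)| := by
    intro k
    have htail : |(ψf (ρ k).1 (ρ k).2 - fk k) (μf (ρ k).1 (ρ k).2)| ≤ η/2 := by
      apply hRfP (ρ k).1 (ρ k).2 (RR k) le_rfl
      intro y
      rw [ContinuousLinearMap.sub_apply, hgδ (ρ k).1 (ρ k).2 y, hfke k y]
      simp only [hGf]
      ring
    have hbig := hμval (ρ k).1 (ρ k).2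
    have htri : |ψf (ρ k).1 (ρ k).2 (μf (ρ k).1 (ρ k).2)|
        ≤ |fk k (μf (ρ k).1 (ρ k).2)|
          + |(ψf (ρ k).1 (ρ k).2 - fk k) (μf (ρ k).1 (ρ k).2)| := by
      rw [ContinuousLinearMap.sub_apply]
      have h := abs_add_le (fk k (μf (ρ k).1 (ρ k).2))
        (ψf (ρ k).1 (ρ k).2 (μf (ρ k).1 (ρ k).2) - fk k (μf (ρ k).1 (ρ k).2))
      have h2 : fk k (μf (ρ k).1 (ρ k).2)
          + (ψf (ρ k).1 (ρ k).2 (μf (ρ k).1 (ρ k).2) - fk k (μf (ρ k).1 (ρ k).2))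
          = ψf (ρ k).1 (ρ k).2 (μf (ρ k).1 (ρ k).2) := by ring
      rw [h2] at h
      exact h
    linarith
  -- WUC
  have hwuc : IsWUC fk := by
    intro ψ
    apply summable_of_sum_range_le (c := ‖ψ‖ * 7) (fun n => abs_nonneg _)
    intro N
    set ε : ℕ → ℝ := fun k => if 0 ≤ ψ (fk k) then 1 else -1 with hε
    have hεabs : ∀ k, |ε k| ≤ 1 := by
      intro k; simp only [hε]; split_ifs <;> simp
    have hεmul : ∀ k, ε k * ψ (fk k) = |ψ (fk k)| := by
      intro k; simp only [hε]
      split_ifs with h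
      · rw [one_mul, abs_of_nonneg h]
      · rw [abs_of_neg (not_le.mp h)]; ring
    have hSlip := shell_sum ha0 hab hgap (by norm_num : (2:ℝ) ≤ 7)
      hGflip hGfd hGflo hGfhi hεabs N
    have hSo : (∑ k ∈ Finset.range N, ε k * Gf k o) = 0 :=
      Finset.sum_eq_zero (fun k _ => by rw [hGfo k, mul_zero])
    obtain ⟨Ψ, hΨn, hΨe⟩ := lift' hδ (by norm_num : (0:ℝ) ≤ 7) hSlip hSo
    have hΨeq : Ψ = ∑ k ∈ Finset.range N, ε k • fk k := by
      apply lift_unique hδ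
      intro y
      rw [hΨe y]
      simp only [ContinuousLinearMap.sum_apply, ContinuousLinearMap.smul_apply,
        smul_eq_mul]
      exact Finset.sum_congr rfl (fun k _ => by rw [hfke k y])
    calc ∑ k ∈ Finset.range N, |ψ (fk k)|
        = ∑ k ∈ Finset.range N, ε k * ψ (fk k) :=
          Finset.sum_congr rfl (fun k _ => (hεmul k).symm)
      _ = ψ Ψ := by
          rw [hΨeq, map_sum]
          exact Finset.sum_congr rfl (fun k _ => by rw [map_smul, smul_eq_mul]) |>.symm
      _ ≤ |ψ Ψ| := le_abs_self _
      _ ≤ ‖ψ‖ * ‖Ψ‖ := ψ.le_opNorm Ψ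
      _ ≤ ‖ψ‖ * 7 := mul_le_mul_of_nonneg_left hΨn (norm_nonneg _)
  obtain ⟨n, hn⟩ := (hV fk hwuc (η/2) (half_pos hη)).exists
  have h1 := hn (μf (ρ n).1 (ρ n).2) (hμΓ (ρ n).1 (ρ n).2)
  linarith [hval n]

end StepA

section Assembly

open scoped Classical

variable {M : Type*} [MetricSpace M] {o : M}
  {F : Type*} [NormedAddCommGroup F] [NormedSpace ℝ F] {δ : M → F} {θ : ℝ}
  {e : M → F →L[ℝ] ℝ}

/-- evaluation bound for functionals with bounded "support" away from `A` -/
lemma bounded_support_eval (hδ : IsLipschitzFree o δ) (hθ : 0 < θ)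
    (hsep : ∀ x y : M, x ≠ y → θ ≤ dist x y) (hc : IsCoord θ o δ e)
    {ψ : F →L[ℝ] ℝ} {f : M → ℝ} {B τ : ℝ} (hB : 0 ≤ B) (hτ : 0 ≤ τ)
    (hψ : ∀ y, ψ (δ y) = f y) (hfB : ∀ y, |f y| ≤ B)
    {A : Finset M} (hsupp : ∀ y, f y ≠ 0 → y ∉ A ∧ y ≠ o)
    {μ : F} (htail : ∀ A' : Finset M, (∀ x ∈ A', x ∉ A) → ∑ x ∈ A', |e x μ| ≤ τ) :
    |ψ μ| ≤ B * (2/θ) * τ := by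
  apply le_of_forall_pos_le_add
  intro ε' hε'
  have hD : (0:ℝ) < B * (2/θ) + ‖ψ‖ + 1 := by positivity
  set ε'' : ℝ := ε' / (B * (2/θ) + ‖ψ‖ + 1) with hε''def
  have hε''pos : 0 < ε'' := div_pos hε' hD
  obtain ⟨ν, hνS, hνd⟩ := Metric.mem_closure_iff.1 (hδ.dense_span μ) ε'' hε''pos
  have hνmem : ν ∈ Submodule.span ℝ (Set.range δ) := hνS
  obtain ⟨c, hcν⟩ := Finsupp.mem_span_range_iff_exists_finsupp.1 hνmem
  set T : Finset M := c.support.filter (fun x => f x ≠ 0) with hT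
  have hTsub : ∀ x ∈ T, x ∈ c.support := fun x hx => (Finset.mem_filter.1 hx).1
  have hTf : ∀ x ∈ T, f x ≠ 0 := fun x hx => (Finset.mem_filter.1 hx).2
  have hψν : ψ ν = ∑ x ∈ T, c x * f x := by
    rw [← hcν, map_finsuppSum]
    have h1 : (c.sum fun x a => ψ (a • δ x)) = ∑ x ∈ c.support, c x * f x := by
      apply Finset.sum_congr rfl
      intro x hx
      show ψ (c x • δ x) = c x * f x
      rw [map_smul, smul_eq_mul, hψ x]
    rw [h1]
    symm
    apply Finset.sum_subset (Finset.filter_subset _ _)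
    intro x hx hxT
    have : f x = 0 := by
      by_contra h
      exact hxT (Finset.mem_filter.2 ⟨hx, h⟩)
    rw [this, mul_zero]
  have hcoord : ∀ x ∈ T, e x ν = (θ/2) * c x := by
    intro x hx
    have hxo : x ≠ o := (hsupp x (hTf x hx)).2
    rw [← hcν, map_finsuppSum]
    have h1 : (c.sum fun z a => e x (a • δ z)) = ∑ z ∈ c.support,
        c z * (if z = x ∧ x ≠ o then θ/2 else 0) := by
      apply Finset.sum_congr rfl
      intro z hz
      show e x (c z • δ z) = c z * (if z = x ∧ x ≠ o then θ/2 else 0)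
      rw [map_smul, smul_eq_mul, hc.2 x z]
    rw [h1, Finset.sum_eq_single_of_mem x (hTsub x hx)]
    · rw [if_pos ⟨rfl, hxo⟩]; ring
    · intro z hz hzx
      rw [if_neg (fun h => hzx h.1), mul_zero]
  have habs : ∀ x ∈ T, |c x| = (2/θ) * |e x ν| := by
    intro x hx
    rw [hcoord x hx, abs_mul, abs_of_nonneg (by linarith : (0:ℝ) ≤ θ/2)]
    field_simp
  have hTA : ∀ x ∈ T, x ∉ A := fun x hx => (hsupp x (hTf x hx)).1
  have hνμ : ‖ν - μ‖ ≤ ε'' := by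
    rw [← dist_eq_norm, dist_comm]
    exact hνd.le
  have hsum1 : ∑ x ∈ T, |e x ν| ≤ τ + ε'' := by
    have h1 : ∀ x ∈ T, |e x ν| ≤ |e x μ| + |e x (ν - μ)| := by
      intro x hx
      have : e x ν = e x μ + e x (ν - μ) := by rw [map_sub]; ring
      rw [this]
      exact abs_add_le _ _
    calc ∑ x ∈ T, |e x ν| ≤ ∑ x ∈ T, (|e x μ| + |e x (ν - μ)|) :=
          Finset.sum_le_sum h1
      _ = ∑ x ∈ T, |e x μ| + ∑ x ∈ T, |e x (ν - μ)| := Finset.sum_add_distrib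
      _ ≤ τ + ε'' := by
          apply add_le_add (htail T hTA)
          exact (ell1_bound hδ hθ hsep hc T (ν - μ)).trans hνμ
  have hψνbound : |ψ ν| ≤ B * (2/θ) * (τ + ε'') := by
    rw [hψν]
    calc |∑ x ∈ T, c x * f x| ≤ ∑ x ∈ T, |c x * f x| := Finset.abs_sum_le_sum_abs _ _
      _ ≤ ∑ x ∈ T, B * ((2/θ) * |e x ν|) := by
          apply Finset.sum_le_sum
          intro x hx
          rw [abs_mul, habs x hx]
          calc (2/θ) * |e x ν| * |f x| ≤ (2/θ) * |e x ν| * B := by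
                apply mul_le_mul_of_nonneg_left (hfB x) (by positivity)
            _ = B * ((2/θ) * |e x ν|) := by ring
      _ = ∑ x ∈ T, (B * (2/θ)) * |e x ν| := by
          apply Finset.sum_congr rfl; intros; ring
      _ = B * (2/θ) * ∑ x ∈ T, |e x ν| := (Finset.mul_sum _ _ _).symm
      _ ≤ B * (2/θ) * (τ + ε'') := by
          apply mul_le_mul_of_nonneg_left hsum1 (by positivity)
  have hfinal : |ψ μ| ≤ |ψ ν| + ‖ψ‖ * ε'' := by
    have h1 : ψ μ = ψ ν + ψ (μ - ν) := by rw [map_sub]; ring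
    rw [h1]
    calc |ψ ν + ψ (μ - ν)| ≤ |ψ ν| + |ψ (μ - ν)| := abs_add_le _ _
      _ ≤ |ψ ν| + ‖ψ‖ * ε'' := by
          apply add_le_add_right
          calc |ψ (μ - ν)| ≤ ‖ψ‖ * ‖μ - ν‖ := ψ.le_opNorm _
            _ ≤ ‖ψ‖ * ε'' := by
                apply mul_le_mul_of_nonneg_left _ (norm_nonneg _)
                rw [← dist_eq_norm]
                exact hνd.le
  have harith : B * (2/θ) * (τ + ε'') + ‖ψ‖ * ε'' ≤ B * (2/θ) * τ + ε' := by
    have h1 : B * (2/θ) * (τ + ε'') + ‖ψ‖ * ε''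
        = B * (2/θ) * τ + (B * (2/θ) + ‖ψ‖) * ε'' := by ring
    rw [h1]
    apply add_le_add_right
    calc (B * (2/θ) + ‖ψ‖) * ε'' ≤ (B * (2/θ) + ‖ψ‖ + 1) * ε'' := by
          apply mul_le_mul_of_nonneg_right (by linarith) hε''pos.le
      _ = ε' := by
          rw [hε''def]
          field_simp
  linarith [hψνbound, hfinal]

/-- the dual characterization of the norm, unit-ball version -/
lemma norm_le_of_unit_bounds {x : F} {c : ℝ} (hc : 0 ≤ c)
    (h : ∀ φ : F →L[ℝ] ℝ, ‖φ‖ ≤ 1 → |φ x| ≤ c) : ‖x‖ ≤ c := by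
  apply NormedSpace.norm_le_dual_bound ℝ x hc
  intro f
  rcases eq_or_ne f 0 with rfl | hf
  · simp
  · have hn : 0 < ‖f‖ := norm_pos_iff.2 hf
    have h1 : ‖(‖f‖⁻¹ • f : F →L[ℝ] ℝ)‖ ≤ 1 := by
      rw [norm_smul, norm_inv, norm_norm]
      rw [inv_mul_cancel₀ hn.ne']
    have h2 := h (‖f‖⁻¹ • f) h1
    rw [ContinuousLinearMap.smul_apply, smul_eq_mul, abs_mul,
      abs_of_pos (inv_pos.2 hn)] at h2
    have h3 : |f x| ≤ c * ‖f‖ := by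
      have := mul_le_mul_of_nonneg_left h2 hn.le
      rw [← mul_assoc, mul_inv_cancel₀ hn.ne', one_mul] at this
      linarith [this]
    calc ‖f x‖ = |f x| := rfl
      _ ≤ c * ‖f‖ := h3

end Assembly

section Final

open scoped Classical

variable {M : Type*} [MetricSpace M] {o : M}
  {F : Type*} [NormedAddCommGroup F] [NormedSpace ℝ F] {δ : M → F} {θ : ℝ}
  {e : M → F →L[ℝ] ℝ}

/-- every (V*)-set in a free space over a uniformly discrete space is totally bounded -/
lemma vstar_totallyBounded (hδ : IsLipschitzFree o δ) (hθ : 0 < θ)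
    (hsep : ∀ x y : M, x ≠ y → θ ≤ dist x y) (hc : IsCoord θ o δ e)
    {Γ : Set F} (hV : IsVStarSet Γ) : TotallyBounded Γ := by
  obtain ⟨C₀, hC₀0, hC₀⟩ := vstar_bounded hV
  rw [Metric.totallyBounded_iff]
  intro ε hε
  obtain ⟨r, hr1, hrP⟩ := vstar_radial hδ hV (ε/8) (by linarith)
  have hr0 : (0:ℝ) < r := by linarith
  set η' : ℝ := ε * θ / (64 * r) with hη'def
  have hη' : 0 < η' := by positivity
  obtain ⟨A, hA⟩ := vstar_small_tails hδ hθ hsep hc hV η' hη'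
  -- the approximations
  set ν : F → F := fun μ => ∑ x ∈ A, (cutoff r (dist x o) * ((2/θ) * e x μ)) • δ x
    with hν
  have key : ∀ μ ∈ Γ, ‖μ - ν μ‖ ≤ ε/4 := by
    intro μ hμ
    apply norm_le_of_unit_bounds (by linarith)
    intro φ hφ1
    set g : M → ℝ := fun y => φ (δ y) with hg
    have hglip : ∀ u v : M, |g u - g v| ≤ 1 * dist u v := by
      intro u v
      rw [one_mul]
      exact restrict_lip hδ φ hφ1 u v
    have hgo : g o = 0 := by
      simp only [hg]
      rw [hδ.map_base, map_zero]
    have hgd : ∀ y, |g y| ≤ dist y o := fun y => restrict_bound hδ φ hφ1 y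
    -- ψ₁ : the radial tail part
    have hf1lip : ∀ u v : M,
        |(1 - cutoff r (dist u o)) * g u - (1 - cutoff r (dist v o)) * g v|
          ≤ 4 * dist u v := by
      intro u v
      have h := cutMulOne_lip hr0 hglip hgd u v
      calc _ ≤ (1 + 3) * dist u v := h
        _ = 4 * dist u v := by norm_num
    obtain ⟨ψ₁, hψ₁n, hψ₁e⟩ := lift' hδ (by norm_num : (0:ℝ) ≤ 4) hf1lip
      (by rw [hgo, mul_zero])
    have hψ₁μ : |ψ₁ μ| ≤ ε/8 := hrP ψ₁ ⟨g, hglip, hgo, hψ₁e⟩ μ hμ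
    -- ψ₂ : the bounded part away from A
    set T3 : F →L[ℝ] ℝ := ∑ x ∈ A, (cutoff r (dist x o) * g x * (2/θ)) • e x
      with hT3
    set ψ₂ : F →L[ℝ] ℝ := φ - ψ₁ - T3 with hψ₂
    set f₂ : M → ℝ := fun y => if y ∈ A ∧ y ≠ o then 0 else cutoff r (dist y o) * g y
      with hf₂
    have hψ₂δ : ∀ y, ψ₂ (δ y) = f₂ y := by
      intro y
      simp only [hψ₂, ContinuousLinearMap.sub_apply, hT3,
        ContinuousLinearMap.sum_apply, ContinuousLinearMap.smul_apply, smul_eq_mul]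
      have h3 : ∑ x ∈ A, cutoff r (dist x o) * g x * (2/θ) * e x (δ y)
          = if y ∈ A ∧ y ≠ o then (cutoff r (dist y o) * g y * (2/θ)) * (θ/2) else 0 := by
        rw [← ind_sum_eq θ o (fun x => cutoff r (dist x o) * g x * (2/θ)) A y]
        apply Finset.sum_congr rfl
        intro x hx
        rw [hc.2 x y]
      rw [hψ₁e y, h3]
      have hgy : φ (δ y) = g y := rfl
      rw [hgy]
      simp only [hf₂]
      by_cases hy : y ∈ A ∧ y ≠ o
      · rw [if_pos hy, if_pos hy]
        have h4 : cutoff r (dist y o) * g y * (2/θ) * (θ/2)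
            = cutoff r (dist y o) * g y := by field_simp
        rw [h4]
        ring
      · rw [if_neg hy, if_neg hy]
        ring
    have hf₂B : ∀ y, |f₂ y| ≤ 2 * r := by
      intro y
      simp only [hf₂]
      split_ifs with hy
      · rw [abs_zero]; linarith
      · by_cases hcut : cutoff r (dist y o) = 0
        · rw [hcut, zero_mul, abs_zero]; linarith
        · have hd2r : dist y o < 2 * r := cutoff_pos_lt hr0 hcut
          rw [abs_mul]
          calc |cutoff r (dist y o)| * |g y| ≤ 1 * |g y| := by
                apply mul_le_mul_of_nonneg_right _ (abs_nonneg _)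
                rw [abs_of_nonneg (cutoff_nonneg _ _)]
                exact cutoff_le_one _ _
            _ = |g y| := one_mul _
            _ ≤ dist y o := hgd y
            _ ≤ 2 * r := hd2r.le
    have hf₂o : f₂ o = 0 := by
      simp only [hf₂]
      rw [if_neg (by simp), hgo, mul_zero]
    have hf₂supp : ∀ y, f₂ y ≠ 0 → y ∉ A ∧ y ≠ o := by
      intro y hy
      have hyo : y ≠ o := by
        rintro rfl
        exact hy hf₂o
      simp only [hf₂] at hy
      constructor
      · intro hyA
        exact hy (by rw [if_pos ⟨hyA, hyo⟩])
      · exact hyo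
    have hψ₂μ : |ψ₂ μ| ≤ (2*r) * (2/θ) * η' :=
      bounded_support_eval hδ hθ hsep hc (by linarith) hη'.le hψ₂δ hf₂B hf₂supp
        (hA μ hμ)
    have harith : (2*r) * (2/θ) * η' = ε/16 := by
      rw [hη'def]
      field_simp
      ring
    -- decomposition
    have hφν : φ (ν μ) = T3 μ := by
      simp only [hν, hT3, map_sum, map_smul, smul_eq_mul,
        ContinuousLinearMap.sum_apply, ContinuousLinearMap.smul_apply]
      apply Finset.sum_congr rfl
      intro x hx
      have : φ (δ x) = g x := rfl
      rw [this]
      ring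
    have hdecomp : φ (μ - ν μ) = ψ₁ μ + ψ₂ μ := by
      rw [map_sub, hφν]
      simp only [hψ₂, ContinuousLinearMap.sub_apply]
      ring
    rw [hdecomp]
    calc |ψ₁ μ + ψ₂ μ| ≤ |ψ₁ μ| + |ψ₂ μ| := abs_add_le _ _
      _ ≤ ε/8 + ε/16 := add_le_add hψ₁μ (by rw [harith] at hψ₂μ; exact hψ₂μ)
      _ ≤ ε/4 := by linarith
  -- compactness of the finite-dimensional box
  set C₁ : ℝ := (2/θ) * C₀ with hC₁
  have hC₁0 : 0 ≤ C₁ := by positivity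
  set TT : ({x // x ∈ A} → ℝ) → F := fun c => ∑ x : {x // x ∈ A}, c x • δ (x : M)
    with hTT
  have hTTcont : Continuous TT := by
    apply continuous_finset_sum
    intro x _
    exact (continuous_apply x).smul continuous_const
  have hbox : IsCompact (Set.pi Set.univ fun _ : {x // x ∈ A} => Icc (-C₁) C₁) :=
    isCompact_univ_pi (fun _ => isCompact_Icc)
  have hK : IsCompact (TT '' (Set.pi Set.univ fun _ : {x // x ∈ A} => Icc (-C₁) C₁)) :=
    hbox.image hTTcont
  have hνK : ∀ μ ∈ Γ, ν μ ∈ TT '' (Set.pi Set.univ fun _ : {x // x ∈ A} => Icc (-C₁) C₁) := by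
    intro μ hμ
    refine ⟨fun x => cutoff r (dist (x : M) o) * ((2/θ) * e (x : M) μ), ?_, ?_⟩
    · intro x _
      have h1 : |cutoff r (dist (x:M) o) * ((2/θ) * e (x:M) μ)| ≤ C₁ := by
        rw [abs_mul]
        calc |cutoff r (dist (x:M) o)| * |(2/θ) * e (x:M) μ|
            ≤ 1 * |(2/θ) * e (x:M) μ| := by
              apply mul_le_mul_of_nonneg_right _ (abs_nonneg _)
              rw [abs_of_nonneg (cutoff_nonneg _ _)]
              exact cutoff_le_one _ _
          _ = |(2/θ) * e (x:M) μ| := one_mul _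
          _ ≤ C₁ := by
              rw [abs_mul, abs_of_nonneg (by positivity : (0:ℝ) ≤ 2/θ), hC₁]
              apply mul_le_mul_of_nonneg_left _ (by positivity)
              calc |e (x:M) μ| ≤ ‖e (x:M)‖ * ‖μ‖ := (e (x:M)).le_opNorm μ
                _ ≤ 1 * C₀ := mul_le_mul (hc.1 _) (hC₀ μ hμ) (norm_nonneg _) zero_le_one
                _ = C₀ := one_mul _
      exact abs_le.1 h1
    · simp only [hTT, hν]
      exact Finset.sum_coe_sort A (fun x => (cutoff r (dist x o) * ((2/θ) * e x μ)) • δ x)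
  obtain ⟨t, htfin, htsub⟩ := Metric.totallyBounded_iff.1 hK.totallyBounded (ε/2)
    (by linarith)
  refine ⟨t, htfin, ?_⟩
  intro μ hμ
  have h1 := htsub (hνK μ hμ)
  simp only [Set.mem_iUnion, Metric.mem_ball] at h1
  obtain ⟨y, hyt, hyd⟩ := h1
  simp only [Set.mem_iUnion, Metric.mem_ball]
  refine ⟨y, hyt, ?_⟩
  calc dist μ y ≤ dist μ (ν μ) + dist (ν μ) y := dist_triangle _ _ _
    _ ≤ ε/4 + dist (ν μ) y := by
        apply add_le_add_left
        rw [dist_eq_norm]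
        exact key μ hμ
    _ < ε/4 + ε/2 := by linarith
    _ ≤ ε := by linarith

end Final

end VStarAux

/-- If `M` is a uniformly discrete pointed metric space, i.e.
`inf {d(x,y) : x ≠ y} > 0`, then the Lipschitz-free space `F(M)` has property (V*). -/
theorem propertyVStar_of_uniformlyDiscrete
    {M : Type*} [MetricSpace M]
    (hdisc : ∃ θ > (0 : ℝ), ∀ x y : M, x ≠ y → θ ≤ dist x y) (o : M)
    {F : Type*} [NormedAddCommGroup F] [NormedSpace ℝ F] [CompleteSpace F]
    (δ : M → F) (hδ : IsLipschitzFree o δ) :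
    HasPropertyVStar F := by
  obtain ⟨θ, hθ, hsep⟩ := hdisc
  obtain ⟨e, hcoord⟩ := coord_exists hδ hθ hsep
  intro Γ hV
  have htb : TotallyBounded Γ := vstar_totallyBounded hδ hθ hsep hcoord hV
  have hcl : IsCompact (closure Γ) :=
    isCompact_iff_totallyBounded_isComplete.2 ⟨htb.closure, isClosed_closure.isComplete⟩
  haveI ht2 : T2Space (WeakSpace ℝ F) := by
    constructor
    intro x y hxy
    let x' : F := x
    let y' : F := y
    have hne : x' - y' ≠ 0 := sub_ne_zero.2 (fun h => hxy h)
    obtain ⟨f, -, hf⟩ := exists_dual_vector ℝ (x' - y') (norm_ne_zero_iff.2 hne)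
    have hfc : Continuous fun z : WeakSpace ℝ F => f (show F from z) :=
      WeakBilin.eval_continuous _ f
    refine separated_by_continuous hfc ?_
    show f x' ≠ f y'
    intro h
    rw [map_sub, h, sub_self] at hf
    exact hne (by simpa [eq_comm] using norm_eq_zero.1 (by exact_mod_cast hf.symm))
  have hcont : Continuous (⇑(toWeakSpace ℝ F)) := (toWeakSpaceCLM ℝ F).continuous
  have hKc : IsCompact ((toWeakSpace ℝ F) '' closure Γ) := hcl.image hcont
  exact hKc.of_isClosed_subset isClosed_closure
    (closure_minimal (Set.image_mono subset_closure) hKc.isClosed)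
end
end

section
/- Suppose that for every n ∈ ℕ there exist a finite set F_n ⊂ ℓ₁ and a 1-Lipschitz map φ_n : F_n → ℓ₁ that admits no Lipschitz extension Φ_n : ℓ₁ → ℓ₁ with Lip(Φ_n) ≤ n. Then there exist a compact set K ⊂ ℓ₁ and a Lipschitz map φ : K → ℓ₁ that admits no Lipschitz extension Φ : ℓ₁ → ℓ₁. Consequently, the Lipschitz extension property for ℓ₁-valued maps from compact subsets fails in M = ℓ₁. -/
open scoped ENNReal

noncomputable section

theorem aux_no_lipschitz_extension_from_compact
    {E : Type*} [NormedAddCommGroup E] [NormedSpace ℝ E]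
    (v : E) (hv : v ≠ 0)
    (h : ∀ n : ℕ, ∃ Fn : Set E, Fn.Finite ∧
      ∃ φ : E → E, LipschitzOnWith 1 φ Fn ∧
        ¬ ∃ Φ : E → E, LipschitzWith (n : NNReal) Φ ∧ ∀ x ∈ Fn, Φ x = φ x) :
    ∃ K : Set E, IsCompact K ∧
      ∃ φ : E → E, (∃ C : NNReal, LipschitzOnWith C φ K) ∧
        ¬ ∃ Φ : E → E, (∃ C : NNReal, LipschitzWith C Φ) ∧
          ∀ x ∈ K, Φ x = φ x := by
  classical
  choose F hFfin φ₀ hφlip hnoext using h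
  -- each F n is nonempty
  have hFne : ∀ n, (F n).Nonempty := by
    intro n
    by_contra hne
    rw [Set.not_nonempty_iff_eq_empty] at hne
    exact hnoext n ⟨fun _ => 0, (LipschitzWith.const 0).weaken zero_le,
      by simp [hne]⟩
  choose p hp using hFne
  -- a bound on the diameter of F n
  have hdex : ∀ n, ∃ d : ℝ, 1 ≤ d ∧ ∀ x ∈ F n, ‖x - p n‖ ≤ d := by
    intro n
    obtain ⟨b, hb⟩ := ((hFfin n).image (fun x => ‖x - p n‖)).bddAbove
    exact ⟨max 1 b, le_max_left _ _, fun x hx =>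
      le_trans (hb (Set.mem_image_of_mem _ hx)) (le_max_right _ _)⟩
  choose d hd1 hdb using hdex
  have hd0 : ∀ n, (0:ℝ) < d n := fun n => lt_of_lt_of_le one_pos (hd1 n)
  -- unit vector
  set e : E := ‖v‖⁻¹ • v with he_def
  have he : ‖e‖ = 1 := by
    rw [he_def, norm_smul, norm_inv, norm_norm, inv_mul_cancel₀ (norm_ne_zero_iff.2 hv)]
  -- scales
  set r : ℕ → ℝ := fun n => (1/4 : ℝ) ^ n with hr_def
  have hr0 : ∀ n, (0:ℝ) < r n := fun n => pow_pos (by norm_num) n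
  have hrle : ∀ {m n : ℕ}, m ≤ n → r n ≤ r m := fun {m n} hmn =>
    pow_le_pow_of_le_one (by norm_num) (by norm_num) hmn
  have hrlt : ∀ {m n : ℕ}, m < n → r n ≤ r m / 4 := by
    intro m n hmn
    have h1 : r n ≤ r (m+1) := hrle hmn
    have h2 : r (m+1) = r m / 4 := by simp [hr_def, pow_succ]; ring
    linarith
  set c : ℕ → ℝ := fun n => r n / (8 * d n) with hc_def
  have hc0 : ∀ n, (0:ℝ) < c n := fun n => div_pos (hr0 n) (by have := hd0 n; linarith)
  have hcd : ∀ n, c n * d n = r n / 8 := by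
    intro n
    have hdn : d n ≠ 0 := (hd0 n).ne'
    rw [hc_def]; field_simp
  set q : ℕ → E := fun n => r n • e with hq_def
  have hqnorm : ∀ n, ‖q n‖ = r n := by
    intro n; rw [hq_def]; simp [norm_smul, he, abs_of_pos (hr0 n)]
  -- the affine embeddings and copies
  set A : ℕ → E → E := fun n x => c n • (x - p n) + q n with hA_def
  set H : ℕ → Set E := fun n => A n '' F n with hH_def
  -- basic estimates
  have hHq : ∀ n, ∀ y ∈ H n, ‖y - q n‖ ≤ r n / 8 := by
    intro n y hy
    obtain ⟨x, hx, rfl⟩ := hy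
    have : A n x - q n = c n • (x - p n) := by
      rw [hA_def]; exact add_sub_cancel_right _ _
    rw [this, norm_smul, Real.norm_eq_abs, abs_of_pos (hc0 n)]
    calc c n * ‖x - p n‖ ≤ c n * d n := by
          exact mul_le_mul_of_nonneg_left (hdb n x hx) (le_of_lt (hc0 n))
    _ = r n / 8 := hcd n
  have hsep : ∀ {m n : ℕ}, m < n → ∀ y ∈ H m, ∀ z ∈ H n, r m / 2 ≤ ‖y - z‖ := by
    intro m n hmn y hy z hz
    have h1 : ‖y - q m‖ ≤ r m / 8 := hHq m y hy
    have h2 : ‖z - q n‖ ≤ r n / 8 := hHq n z hz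
    have h3 : r n ≤ r m / 4 := hrlt hmn
    have h4 : ‖q m - q n‖ = r m - r n := by
      rw [hq_def]
      have : r m • e - r n • e = (r m - r n) • e := by rw [sub_smul]
      rw [this, norm_smul, Real.norm_eq_abs, he, mul_one,
        abs_of_nonneg (by linarith [hrlt hmn, hr0 n])]
    have h5 : q m - q n = (q m - y) + ((y - z) + (z - q n)) := by abel
    have h6 : ‖q m - q n‖ ≤ ‖q m - y‖ + (‖y - z‖ + ‖z - q n‖) :=
      h5 ▸ le_trans (norm_add_le _ _) (by gcongr; exact norm_add_le _ _)
    rw [norm_sub_rev (q m) y] at h6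
    have hrm := hr0 m
    linarith [h4, h6, h1, h2, h3]
  have hdisj : ∀ {m n : ℕ}, m ≠ n → ∀ y, y ∈ H m → y ∈ H n → False := by
    intro m n hne y hym hyn
    rcases lt_or_gt_of_ne hne with hlt | hgt
    · have := hsep hlt y hym y hyn
      simp at this
      linarith [hr0 m]
    · have := hsep hgt y hyn y hym
      simp at this
      linarith [hr0 n]
  have hnormH : ∀ n, ∀ y ∈ H n, 7/8 * r n ≤ ‖y‖ ∧ ‖y‖ ≤ 2 * r n := by
    intro n y hy
    have h1 : ‖y - q n‖ ≤ r n / 8 := hHq n y hy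
    have h2 : ‖q n‖ = r n := hqnorm n
    constructor
    · have h3 := norm_sub_norm_le (q n) y
      rw [norm_sub_rev] at h3
      linarith
    · have h3 := norm_sub_norm_le y (q n)
      linarith [hr0 n]
  have h0H : ∀ n, (0:E) ∉ H n := by
    intro n h0
    have := (hnormH n 0 h0).1
    simp at this
    linarith [hr0 n]
  -- injectivity of the affine embeddings
  have hAinj : ∀ n x x', A n x = A n x' → x = x' := by
    intro n x x' hxx
    rw [hA_def] at hxx
    simp only [add_left_inj] at hxx
    have := smul_right_injective E (hc0 n).ne' hxx
    exact sub_left_injective this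
  -- the index function
  set N : E → ℕ := fun y => if hy : ∃ n, y ∈ H n then hy.choose else 0 with hN_def
  have hN : ∀ n y, y ∈ H n → N y = n := by
    intro n y hy
    have hex : ∃ k, y ∈ H k := ⟨n, hy⟩
    rw [hN_def]
    simp only [dif_pos hex]
    by_contra hne
    exact hdisj hne y hex.choose_spec hy
  -- the preimage function
  set g : ℕ → E → E := fun n y => Function.invFunOn (A n) (F n) y with hg_def
  have hg : ∀ n, ∀ y ∈ H n, g n y ∈ F n ∧ A n (g n y) = y := by
    intro n y hy
    obtain ⟨x, hx, hxy⟩ := hy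
    exact ⟨Function.invFunOn_mem ⟨x, hx, hxy⟩, Function.invFunOn_eq ⟨x, hx, hxy⟩⟩
  -- the map φ
  set φfun : E → E := fun y => if _ : ∃ n, y ∈ H n then
      c (N y) • (φ₀ (N y) (g (N y) y) - φ₀ (N y) (p (N y))) else 0 with hφ_def
  have hφval : ∀ n, ∀ x ∈ F n, φfun (A n x) = c n • (φ₀ n x - φ₀ n (p n)) := by
    intro n x hx
    have hmem : A n x ∈ H n := ⟨x, hx, rfl⟩
    have hex : ∃ k, A n x ∈ H k := ⟨n, hmem⟩
    rw [hφ_def]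
    simp only [dif_pos hex]
    rw [hN n _ hmem]
    have hgx : g n (A n x) = x := hAinj n _ _ ((hg n _ hmem).2)
    rw [hgx]
  have hφout : ∀ y, (∀ n, y ∉ H n) → φfun y = 0 := by
    intro y hy
    rw [hφ_def]
    exact dif_neg (fun ⟨n, hn⟩ => hy n hn)
  have hφ0 : φfun 0 = 0 := hφout 0 h0H
  -- norm bound on each copy
  have hφnorm : ∀ n, ∀ y ∈ H n, ‖φfun y‖ ≤ r n / 8 := by
    intro n y hy
    obtain ⟨x, hx, rfl⟩ := hy
    rw [hφval n x hx, norm_smul, Real.norm_eq_abs, abs_of_pos (hc0 n)]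
    have hlip := lipschitzOnWith_iff_dist_le_mul.1 (hφlip n) x hx (p n) (hp n)
    rw [dist_eq_norm] at hlip
    simp only [NNReal.coe_one, one_mul] at hlip
    rw [dist_eq_norm] at hlip
    calc c n * ‖φ₀ n x - φ₀ n (p n)‖ ≤ c n * ‖x - p n‖ :=
          mul_le_mul_of_nonneg_left hlip (hc0 n).le
    _ ≤ c n * d n := mul_le_mul_of_nonneg_left (hdb n x hx) (hc0 n).le
    _ = r n / 8 := hcd n
  set K : Set E := insert 0 (⋃ n, H n) with hK_def
  -- Lipschitz within a single copy
  have hsame : ∀ n, ∀ y ∈ H n, ∀ z ∈ H n, dist (φfun y) (φfun z) ≤ dist y z := by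
    intro n y hy z hz
    obtain ⟨x, hx, rfl⟩ := hy
    obtain ⟨x', hx', rfl⟩ := hz
    rw [hφval n x hx, hφval n x' hx', dist_eq_norm, dist_eq_norm, ← smul_sub]
    have hAd : A n x - A n x' = c n • (x - x') := by
      rw [hA_def]
      simp only [add_sub_add_right_eq_sub, ← smul_sub]
      congr 1
      abel
    rw [hAd, norm_smul, norm_smul]
    have hlip := lipschitzOnWith_iff_dist_le_mul.1 (hφlip n) x hx x' hx'
    simp only [NNReal.coe_one, one_mul, dist_eq_norm] at hlip
    have harr : φ₀ n x - φ₀ n (p n) - (φ₀ n x' - φ₀ n (p n)) = φ₀ n x - φ₀ n x' := by abel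
    rw [harr]
    exact mul_le_mul_of_nonneg_left hlip (norm_nonneg _)
  -- Lipschitz across distinct copies
  have hcross : ∀ {m n : ℕ}, m < n → ∀ y ∈ H m, ∀ z ∈ H n,
      dist (φfun y) (φfun z) ≤ dist y z := by
    intro m n hmn y hy z hz
    have h1 : ‖φfun y‖ ≤ r m / 8 := hφnorm m y hy
    have h2 : ‖φfun z‖ ≤ r n / 8 := hφnorm n z hz
    have h3 : r n ≤ r m / 4 := hrlt hmn
    have h4 : r m / 2 ≤ ‖y - z‖ := hsep hmn y hy z hz
    calc dist (φfun y) (φfun z) ≤ ‖φfun y‖ + ‖φfun z‖ := dist_le_norm_add_norm _ _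
    _ ≤ r m / 8 + r m / 4 / 8 := by linarith
    _ ≤ r m / 2 := by linarith [hr0 m]
    _ ≤ ‖y - z‖ := h4
    _ = dist y z := (dist_eq_norm y z).symm
  -- Lipschitz from the origin
  have hzero : ∀ n, ∀ z ∈ H n, dist (φfun 0) (φfun z) ≤ dist 0 z := by
    intro n z hz
    rw [hφ0, dist_comm, dist_zero_right, dist_comm, dist_zero_right]
    have h1 : ‖φfun z‖ ≤ r n / 8 := hφnorm n z hz
    have h2 : 7/8 * r n ≤ ‖z‖ := (hnormH n z hz).1
    linarith [hr0 n]
  have hlipK : LipschitzOnWith 1 φfun K := by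
    rw [lipschitzOnWith_iff_dist_le_mul]
    intro y hy z hz
    simp only [NNReal.coe_one, one_mul]
    rw [hK_def, Set.mem_insert_iff, Set.mem_iUnion] at hy hz
    rcases hy with rfl | ⟨m, hym⟩
    · rcases hz with rfl | ⟨n, hzn⟩
      · simp
      · exact hzero n z hzn
    · rcases hz with rfl | ⟨n, hzn⟩
      · rw [dist_comm, dist_comm y 0]
        exact hzero m y hym
      · rcases lt_trichotomy m n with hmn | rfl | hnm
        · exact hcross hmn y hym z hzn
        · exact hsame m y hym z hzn
        · rw [dist_comm, dist_comm y z]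
          exact hcross hnm z hzn y hym
  -- compactness of K
  have hHfin : ∀ n, (H n).Finite := fun n => (hFfin n).image _
  set L : ℕ → List E := fun n => (hHfin n).toFinset.toList with hL_def
  have hLmem : ∀ n y, y ∈ L n ↔ y ∈ H n := by
    intro n y
    rw [hL_def]
    simp [Finset.mem_toList, Set.Finite.mem_toFinset]
  set u : ℕ → E := fun m => (L m.unpair.1).getD m.unpair.2 0 with hu_def
  have huK : ∀ m, u m = 0 ∨ (u m ∈ H m.unpair.1 ∧ m.unpair.2 < (L m.unpair.1).length) := by
    intro m
    rcases lt_or_ge m.unpair.2 (L m.unpair.1).length with hlt | hge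
    · right
      refine ⟨?_, hlt⟩
      rw [hu_def]
      simp only [List.getD_eq_getElem _ _ hlt]
      rw [← hLmem]
      exact List.getElem_mem _
    · left
      rw [hu_def]
      exact List.getD_eq_default _ _ hge
  have hHu : ∀ n, ∀ y ∈ H n, ∃ m, u m = y := by
    intro n y hy
    rw [← hLmem] at hy
    obtain ⟨i, hi, hiy⟩ := List.mem_iff_getElem.1 hy
    refine ⟨Nat.pair n i, ?_⟩
    rw [hu_def]
    simp only [Nat.unpair_pair]
    rw [List.getD_eq_getElem _ _ hi]
    exact hiy
  have h0u : ∃ m, u m = 0 := by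
    refine ⟨Nat.pair 0 (L 0).length, ?_⟩
    rw [hu_def]
    simp only [Nat.unpair_pair]
    exact List.getD_eq_default _ _ le_rfl
  have htend : Filter.Tendsto u Filter.atTop (nhds 0) := by
    rw [← Nat.cofinite_eq_atTop, Metric.tendsto_nhds]
    intro ε hε
    rw [Filter.eventually_cofinite]
    obtain ⟨Nn, hNn⟩ : ∃ Nn : ℕ, (1/4:ℝ) ^ Nn < ε / 2 :=
      exists_pow_lt_of_lt_one (half_pos hε) (by norm_num)
    set Lmax := ((Finset.range Nn).sup fun k => (L k).length) + 1 with hLmax_def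
    apply Set.Finite.subset (((Set.finite_Iio Nn).prod (Set.finite_Iio Lmax)).image
      fun pr : ℕ × ℕ => Nat.pair pr.1 pr.2)
    intro m hm
    simp only [Set.mem_setOf_eq, not_lt] at hm
    rcases huK m with h0 | ⟨hmem, hlen⟩
    · rw [h0] at hm
      simp at hm
      linarith
    · have hub : ‖u m‖ ≤ 2 * r m.unpair.1 := (hnormH _ _ hmem).2
      rw [dist_zero_right] at hm
      have hn1 : m.unpair.1 < Nn := by
        by_contra hge
        push_neg at hge
        have : r m.unpair.1 ≤ r Nn := hrle hge
        rw [hr_def] at this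
        simp only at this
        nlinarith [hNn, hm, hub]
      have hn2 : m.unpair.2 < Lmax := by
        rw [hLmax_def]
        have := Finset.le_sup (f := fun k => (L k).length) (Finset.mem_range.2 hn1)
        omega
      exact ⟨(m.unpair.1, m.unpair.2), ⟨hn1, hn2⟩, Nat.pair_unpair m⟩
  have hKeq : K = insert 0 (Set.range u) := by
    rw [hK_def]
    ext y
    simp only [Set.mem_insert_iff, Set.mem_iUnion, Set.mem_range]
    constructor
    · rintro (rfl | ⟨n, hn⟩)
      · exact Or.inl rfl
      · exact Or.inr (hHu n y hn)
    · rintro (rfl | ⟨m, rfl⟩)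
      · exact Or.inl rfl
      · rcases huK m with h0 | ⟨hmem, _⟩
        · exact Or.inl h0
        · exact Or.inr ⟨_, hmem⟩
  have hKcomp : IsCompact K := by
    rw [hKeq]
    exact htend.isCompact_insert_range
  -- conclusion
  refine ⟨K, hKcomp, φfun, ⟨1, hlipK⟩, ?_⟩
  rintro ⟨Φ, ⟨C, hΦ⟩, hext⟩
  set n : ℕ := ⌈(C:ℝ)⌉₊ with hn_def
  have hCn : (C:ℝ) ≤ n := Nat.le_ceil _
  apply hnoext n
  refine ⟨fun z => φ₀ n (p n) + (c n)⁻¹ • Φ (A n z), ?_, ?_⟩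
  · apply LipschitzWith.of_dist_le_mul
    intro z w
    rw [dist_add_left, dist_smul₀]
    have h1 : dist (Φ (A n z)) (Φ (A n w)) ≤ C * dist (A n z) (A n w) := hΦ.dist_le_mul _ _
    have h2 : dist (A n z) (A n w) = c n * dist z w := by
      rw [dist_eq_norm, dist_eq_norm, hA_def]
      simp only [add_sub_add_right_eq_sub, ← smul_sub]
      have harr : z - p n - (w - p n) = z - w := by abel
      rw [harr, norm_smul, Real.norm_eq_abs, abs_of_pos (hc0 n)]
    rw [h2] at h1
    have h3 : ‖(c n)⁻¹‖ = (c n)⁻¹ := by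
      rw [Real.norm_eq_abs, abs_of_pos (inv_pos.2 (hc0 n))]
    rw [h3]
    have hcoe : ((n : NNReal) : ℝ) = (n : ℝ) := by simp
    rw [hcoe]
    have hcne : c n ≠ 0 := (hc0 n).ne'
    calc (c n)⁻¹ * dist (Φ (A n z)) (Φ (A n w)) ≤ (c n)⁻¹ * (C * (c n * dist z w)) :=
          mul_le_mul_of_nonneg_left h1 (inv_pos.2 (hc0 n)).le
    _ = C * dist z w := by field_simp
    _ ≤ (n:ℝ) * dist z w := mul_le_mul_of_nonneg_right hCn dist_nonneg
  · intro x hx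
    have hxK : A n x ∈ K := by
      rw [hK_def]
      exact Set.mem_insert_of_mem _ (Set.mem_iUnion.2 ⟨n, x, hx, rfl⟩)
    have hΦx : Φ (A n x) = φfun (A n x) := hext _ hxK
    show φ₀ n (p n) + (c n)⁻¹ • Φ (A n x) = φ₀ n x
    rw [hΦx, hφval n x hx, smul_smul, inv_mul_cancel₀ (hc0 n).ne', one_smul]
    abel


/-- The Banach space `ℓ₁` of absolutely summable real sequences, regarded as a metric
space with the norm metric. -/
abbrev ellOne : Type := lp (fun _ : ℕ => ℝ) 1

/-- Suppose that for every `n ∈ ℕ` there are a finite set `Fₙ ⊆ ℓ₁` and a 1-Lipschitz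
map `φₙ : Fₙ → ℓ₁` admitting no Lipschitz extension `Φₙ : ℓ₁ → ℓ₁` with `Lip(Φₙ) ≤ n`.
Then there are a compact set `K ⊆ ℓ₁` and a Lipschitz map `φ : K → ℓ₁` admitting no
Lipschitz extension `Φ : ℓ₁ → ℓ₁`; consequently, the Lipschitz extension property for
`ℓ₁`-valued maps from compact subsets fails in `M = ℓ₁`. -/
theorem ellOne_no_lipschitz_extension_from_compact
    (h : ∀ n : ℕ, ∃ Fn : Set ellOne, Fn.Finite ∧
      ∃ φ : ellOne → ellOne, LipschitzOnWith 1 φ Fn ∧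
        ¬ ∃ Φ : ellOne → ellOne, LipschitzWith (n : NNReal) Φ ∧ ∀ x ∈ Fn, Φ x = φ x) :
    ∃ K : Set ellOne, IsCompact K ∧
      ∃ φ : ellOne → ellOne, (∃ C : NNReal, LipschitzOnWith C φ K) ∧
        ¬ ∃ Φ : ellOne → ellOne, (∃ C : NNReal, LipschitzWith C Φ) ∧
          ∀ x ∈ K, Φ x = φ x := by
  have hv : (lp.single 1 0 (1:ℝ) : ellOne) ≠ 0 := by
    intro hcontra
    have : (lp.single 1 0 (1:ℝ) : ellOne) 0 = (0 : ellOne) 0 := by rw [hcontra]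
    simp [lp.single_apply] at this
  exact aux_no_lipschitz_extension_from_compact _ hv h

end
end
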